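/- Let Σ be a nonempty finite set of unit vectors in ℝ^m and define D_Σ(p) = max_{σ ∈ Σ} |1 − ‖pᵀ σ‖₂²| for m × k real matrices p. Then D_Σ is Lipschitz with Lipschitz constant 2 on the set {p : pᵀ p = I_k} of matrices with orthonormal columns, with respect to the Frobenius norm: for all p, q with pᵀ p = I_k and qᵀ q = I_k, |D_Σ(p) − D_Σ(q)| ≤ 2 ‖p − q‖_F. -/

import Mathlib

open Matrix

lemma frob_bound {m k : ℕ} (A : Matrix (Fin m) (Fin k) ℝ)
    (σ : EuclideanSpace ℝ (Fin m)) :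
    ‖Matrix.toEuclideanLin Aᵀ σ‖ ≤ Real.sqrt ((Aᵀ * A).trace) * ‖σ‖ := by
  have htr : (Aᵀ * A).trace = ∑ j, ∑ i, (A i j) ^ 2 := by
    simp [Matrix.trace, Matrix.mul_apply, Matrix.diag, sq]
  have h1 : ‖Matrix.toEuclideanLin Aᵀ σ‖ ^ 2 ≤ (Aᵀ * A).trace * ‖σ‖ ^ 2 := by
    have hnorm : ‖Matrix.toEuclideanLin Aᵀ σ‖ ^ 2
        = ∑ j, (∑ i, A i j * σ i) ^ 2 := by
      rw [EuclideanSpace.norm_eq, Real.sq_sqrt (by positivity)]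
      congr 1; ext j
      simp [Matrix.toEuclideanLin_apply, Matrix.mulVec, dotProduct, sq_abs,
        Matrix.transpose_apply, mul_comm]
    have hσ : ‖σ‖ ^ 2 = ∑ i, (σ i) ^ 2 := by
      rw [EuclideanSpace.norm_eq, Real.sq_sqrt (by positivity)]
      simp [sq_abs]
    rw [hnorm, htr, hσ, Finset.sum_mul]
    exact Finset.sum_le_sum fun j _ => Finset.sum_mul_sq_le_sq_mul_sq _ _ _
  calc ‖Matrix.toEuclideanLin Aᵀ σ‖
      = Real.sqrt (‖Matrix.toEuclideanLin Aᵀ σ‖ ^ 2) := by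
        rw [Real.sqrt_sq (norm_nonneg _)]
    _ ≤ Real.sqrt ((Aᵀ * A).trace * ‖σ‖ ^ 2) := Real.sqrt_le_sqrt h1
    _ = Real.sqrt ((Aᵀ * A).trace) * ‖σ‖ := by
        rw [Real.sqrt_mul (by rw [htr]; positivity), Real.sqrt_sq (norm_nonneg _)]

lemma iso_bound {m k : ℕ} (p : Matrix (Fin m) (Fin k) ℝ)
    (hp : pᵀ * p = 1) (σ : EuclideanSpace ℝ (Fin m)) :
    ‖Matrix.toEuclideanLin pᵀ σ‖ ≤ ‖σ‖ := by
  have hadj : Matrix.toEuclideanLin pᵀ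
      = LinearMap.adjoint (Matrix.toEuclideanLin p) := by
    rw [← Matrix.toEuclideanLin_conjTranspose_eq_adjoint]
    congr 1
  have hcomp : ∀ x : EuclideanSpace ℝ (Fin k),
      Matrix.toEuclideanLin pᵀ (Matrix.toEuclideanLin p x) = x := by
    intro x
    have := Matrix.toEuclideanLin_apply p x
    simp [Matrix.toEuclideanLin_apply, Matrix.mulVec_mulVec, hp]
  have hiso : ∀ x : EuclideanSpace ℝ (Fin k),
      ‖Matrix.toEuclideanLin p x‖ = ‖x‖ := by
    intro x
    have h2 : ‖Matrix.toEuclideanLin p x‖ ^ 2 = ‖x‖ ^ 2 := by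
      rw [← real_inner_self_eq_norm_sq, ← real_inner_self_eq_norm_sq]
      calc (inner ℝ (Matrix.toEuclideanLin p x) (Matrix.toEuclideanLin p x) : ℝ)
          = inner ℝ (Matrix.toEuclideanLin pᵀ (Matrix.toEuclideanLin p x)) x := by
            rw [hadj, LinearMap.adjoint_inner_left]
        _ = (inner ℝ x x : ℝ) := by rw [hcomp]
    nlinarith [norm_nonneg (Matrix.toEuclideanLin p x), norm_nonneg x]
  have key : ‖Matrix.toEuclideanLin pᵀ σ‖ ^ 2 ≤ ‖σ‖ * ‖Matrix.toEuclideanLin pᵀ σ‖ := by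
    rw [← real_inner_self_eq_norm_sq]
    calc (inner ℝ (Matrix.toEuclideanLin pᵀ σ) (Matrix.toEuclideanLin pᵀ σ) : ℝ)
        = inner ℝ σ (Matrix.toEuclideanLin p (Matrix.toEuclideanLin pᵀ σ)) := by
          rw [hadj, LinearMap.adjoint_inner_left]
      _ ≤ ‖σ‖ * ‖Matrix.toEuclideanLin p (Matrix.toEuclideanLin pᵀ σ)‖ :=
          real_inner_le_norm _ _
      _ = ‖σ‖ * ‖Matrix.toEuclideanLin pᵀ σ‖ := by rw [hiso]
  rcases eq_or_lt_of_le (norm_nonneg (Matrix.toEuclideanLin pᵀ σ)) with h | h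
  · rw [← h]; exact norm_nonneg σ
  · nlinarith

/-- The distortion function `D_Σ(p) = max_{σ ∈ Σ} |1 - ‖pᵀ σ‖²|` is
Lipschitz with constant 2 on the set of `m × k` matrices with orthonormal
columns, with respect to the Frobenius norm `‖A‖_F = √(Tr (Aᵀ A))`. -/
theorem stmt3 (m k : ℕ) (S : Finset (EuclideanSpace ℝ (Fin m)))
    (hS : S.Nonempty) (hunit : ∀ σ ∈ S, ‖σ‖ = 1)
    (D : Matrix (Fin m) (Fin k) ℝ → ℝ)
    (hD : ∀ p, D p = S.sup' hS fun σ => |1 - ‖Matrix.toEuclideanLin pᵀ σ‖ ^ 2|)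
    (p q : Matrix (Fin m) (Fin k) ℝ)
    (hp : pᵀ * p = 1) (hq : qᵀ * q = 1) :
    |D p - D q| ≤ 2 * Real.sqrt (((p - q)ᵀ * (p - q)).trace) := by
  set c := Real.sqrt (((p - q)ᵀ * (p - q)).trace) with hc
  -- pointwise bound, symmetric in p and q
  have point : ∀ (a b : Matrix (Fin m) (Fin k) ℝ), aᵀ * a = 1 → bᵀ * b = 1 →
      ∀ σ ∈ S, |1 - ‖Matrix.toEuclideanLin aᵀ σ‖ ^ 2|
        ≤ |1 - ‖Matrix.toEuclideanLin bᵀ σ‖ ^ 2|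
          + 2 * Real.sqrt (((a - b)ᵀ * (a - b)).trace) := by
    intro a b ha hb σ hσ
    have hσ1 : ‖σ‖ = 1 := hunit σ hσ
    set x := ‖Matrix.toEuclideanLin aᵀ σ‖ with hx
    set y := ‖Matrix.toEuclideanLin bᵀ σ‖ with hy
    have hxb : x ≤ 1 := by rw [hx, ← hσ1]; exact iso_bound a ha σ
    have hyb : y ≤ 1 := by rw [hy, ← hσ1]; exact iso_bound b hb σ
    have hdiff : |x - y| ≤ Real.sqrt (((a - b)ᵀ * (a - b)).trace) := by
      have h1 : |x - y| ≤ ‖Matrix.toEuclideanLin aᵀ σ - Matrix.toEuclideanLin bᵀ σ‖ :=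
        abs_norm_sub_norm_le _ _
      have h2 : Matrix.toEuclideanLin aᵀ σ - Matrix.toEuclideanLin bᵀ σ
          = Matrix.toEuclideanLin (a - b)ᵀ σ := by
        rw [Matrix.transpose_sub, map_sub, LinearMap.sub_apply]
      calc |x - y| ≤ ‖Matrix.toEuclideanLin (a - b)ᵀ σ‖ := by rw [← h2]; exact h1
        _ ≤ Real.sqrt (((a - b)ᵀ * (a - b)).trace) * ‖σ‖ := frob_bound _ _
        _ = Real.sqrt (((a - b)ᵀ * (a - b)).trace) := by rw [hσ1, mul_one]
    have habs : |1 - x ^ 2| - |1 - y ^ 2| ≤ |x ^ 2 - y ^ 2| := by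
      have := abs_sub_abs_le_abs_sub (1 - x ^ 2) (1 - y ^ 2)
      calc |1 - x ^ 2| - |1 - y ^ 2| ≤ |(1 - x ^ 2) - (1 - y ^ 2)| := this
        _ = |y ^ 2 - x ^ 2| := by ring_nf
        _ = |x ^ 2 - y ^ 2| := abs_sub_comm _ _
    have hfac : |x ^ 2 - y ^ 2| ≤ 2 * Real.sqrt (((a - b)ᵀ * (a - b)).trace) := by
      have hxn : (0:ℝ) ≤ x := norm_nonneg _
      have hyn : (0:ℝ) ≤ y := norm_nonneg _
      calc |x ^ 2 - y ^ 2| = |x - y| * |x + y| := by rw [← abs_mul]; ring_nf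
        _ ≤ Real.sqrt (((a - b)ᵀ * (a - b)).trace) * 2 := by
            apply mul_le_mul hdiff ?_ (abs_nonneg _) (Real.sqrt_nonneg _)
            rw [abs_of_nonneg (by linarith)]; linarith
        _ = 2 * Real.sqrt (((a - b)ᵀ * (a - b)).trace) := mul_comm _ _
    linarith
  have hle : ∀ (a b : Matrix (Fin m) (Fin k) ℝ), aᵀ * a = 1 → bᵀ * b = 1 →
      D a ≤ D b + 2 * Real.sqrt (((a - b)ᵀ * (a - b)).trace) := by
    intro a b ha hb
    rw [hD a, hD b]
    apply Finset.sup'_le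
    intro σ hσ
    calc |1 - ‖Matrix.toEuclideanLin aᵀ σ‖ ^ 2|
        ≤ |1 - ‖Matrix.toEuclideanLin bᵀ σ‖ ^ 2|
          + 2 * Real.sqrt (((a - b)ᵀ * (a - b)).trace) := point a b ha hb σ hσ
      _ ≤ (S.sup' hS fun σ => |1 - ‖Matrix.toEuclideanLin bᵀ σ‖ ^ 2|)
          + 2 * Real.sqrt (((a - b)ᵀ * (a - b)).trace) := by
          exact add_le_add_left (Finset.le_sup' (fun σ => |1 - ‖Matrix.toEuclideanLin bᵀ σ‖ ^ 2|) hσ) _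
  have h1 := hle p q hp hq
  have h2 := hle q p hq hp
  have hsym : ((q - p)ᵀ * (q - p)).trace = ((p - q)ᵀ * (p - q)).trace := by
    have : q - p = -(p - q) := (neg_sub p q).symm
    rw [this, Matrix.transpose_neg, Matrix.neg_mul, Matrix.mul_neg, neg_neg]
  rw [hsym] at h2
  rw [abs_sub_le_iff]
  constructor <;> linarith
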